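/- The approval-maximising rule (with the canonical lexicographic tie-breaking rule T) is not approximately strategyproof, under both the overlap preference model and the cost preference model: there exist an allocation instance I = ⟨𝒫, c, B⟩, an approval profile A in which some agent i submits a ballot A_i ≠ top_i(𝒫), such that for every project p ∈ 𝒫, agent i strictly prefers F(I, A) to F(I, (A_{-i}, top_i(𝒫))) ∪ {p} with respect to ⪰_{top_i(𝒫)}, where F is the approval-maximising rule. In particular, this is witnessed by the instance with eight projects of costs c(p_1) = c(p_2) = c(p_3) = 4, c(p_4) = c(p_5) = 6, c(p_6) = c(p_7) = c(p_8) = 3, budget B = 12, and three agents with preference orders p_6 ▷_1 p_7 ▷_1 p_8 ▷_1 …, p_4 ▷_2 p_5 ▷_2 …, and p_1 ▷_3 p_2 ▷_3 p_3 ▷_3 …, where agent 1 submits {p_5, p_6, p_7} instead of {p_6, p_7, p_8}. -/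

import Mathlib

open Finset

namespace PB

open scoped Classical

/-- An approval/shortlisting profile for `n` agents: each agent contributes a
finite set of (indices of) projects. Projects are identified with their indices. -/
abbrev Profile (n : ℕ) := Fin n → Finset ℕ

/-- The union `⋃ P` of all proposals in a profile. -/
def unionP {n : ℕ} (P : Profile n) : Finset ℕ := Finset.univ.sup P

/-- Encoding of a finite set of projects; a set is lexicographically preferred
(amongst the projects on which two sets differ, the one with the lowest index
belongs to the preferred set) iff its encoding is larger. -/
noncomputable def enc (P : Finset ℕ) : ℚ := P.sum fun i => (1 / 2 : ℚ) ^ i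

/-- The canonical tie-breaking rule `T` on a family of sets of projects:
the (unique) lexicographically first set of the family. -/
noncomputable def Tfam (𝔓 : Finset (Finset ℕ)) : Finset ℕ :=
  if h : ∃ P ∈ 𝔓, ∀ Q ∈ 𝔓, enc Q ≤ enc P then h.choose else ∅

/-- The `r`-least element of a finite set of projects (`r` read as "strictly before"). -/
noncomputable def first (r : ℕ → ℕ → Prop) (P : Finset ℕ) : ℕ :=
  if h : ∃ p ∈ P, ∀ q ∈ P, q ≠ p → r p q then h.choose else 0

/-- The canonical tie-breaking rule `T` on a nonempty set of projects: least index. -/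
noncomputable def Tproj (P : Finset ℕ) : ℕ := first (· < ·) P

noncomputable def greedyAux (c : ℕ → ℕ) (r : ℕ → ℕ → Prop) : ℕ → Finset ℕ → ℕ → Finset ℕ
  | 0, _, _ => ∅
  | fuel + 1, P, b =>
    if P.Nonempty then
      if c (first r P) ≤ b then
        insert (first r P) (greedyAux c r fuel (P.erase (first r P)) (b - c (first r P)))
      else greedyAux c r fuel (P.erase (first r P)) b
    else ∅

/-- Greedy selection: examine the projects of `P` following the strict order `r`,
selecting a project iff doing so keeps the total cost within the budget `B`. -/
noncomputable def GREED (c : ℕ → ℕ) (B : ℕ) (P : Finset ℕ) (r : ℕ → ℕ → Prop) : Finset ℕ :=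
  greedyAux c r P.card P B

/-- A shortlisting rule: for every number `n` of agents, cost function, budget
limit, universe `ℙ` of projects and shortlisting profile, a shortlist. -/
abbrev ShortRule := ∀ n : ℕ, (ℕ → ℕ) → ℕ → Finset ℕ → Profile n → Finset ℕ

/-- An allocation rule: for every number `n` of agents, cost function, budget
limit, set `Sh` of shortlisted projects and approval profile, a budget allocation. -/
abbrev AllocRule := ∀ n : ℕ, (ℕ → ℕ) → ℕ → Finset ℕ → Profile n → Finset ℕ

/-- A shortlisting rule must return a subset of the union of the proposals. -/
def IsShortRule (R : ShortRule) : Prop :=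
  ∀ (n : ℕ) (c : ℕ → ℕ) (B : ℕ) (ℙ : Finset ℕ) (P : Profile n),
    (∀ j, P j ⊆ ℙ) → R n c B ℙ P ⊆ unionP P

/-- An allocation rule must return a feasible budget allocation. -/
def IsAllocRule (F : AllocRule) : Prop :=
  ∀ (n : ℕ) (c : ℕ → ℕ) (B : ℕ) (Sh : Finset ℕ) (A : Profile n),
    (∀ j, A j ⊆ Sh) → F n c B Sh A ⊆ Sh ∧ (F n c B Sh A).sum c ≤ B

/-- The nomination shortlisting rule. -/
def nomination : ShortRule := fun _ _ _ _ P => unionP P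

/-- Non-wastefulness of a shortlisting rule. -/
def NonWasteful (R : ShortRule) : Prop :=
  ∀ (n : ℕ) (c : ℕ → ℕ) (B : ℕ) (ℙ : Finset ℕ) (P : Profile n),
    (∀ p ∈ ℙ, c p ≤ B) → (∀ j, P j ⊆ ℙ) →
    B ≤ (R n c B ℙ P).sum c ∨ R n c B ℙ P = unionP P

/-- A shortlist `S` is representatively dominated (given instance and profile). -/
def RepDominated {n : ℕ} (c : ℕ → ℕ) (ℙ : Finset ℕ) (P : Profile n) (S : Finset ℕ) : Prop :=
  ∃ S' ⊆ ℙ, S'.sum c ≤ S.sum c ∧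
    (∀ i, (S ∩ P i).card ≤ (S' ∩ P i).card) ∧ ∃ i, (S ∩ P i).card < (S' ∩ P i).card

/-- Representation efficiency of a shortlisting rule. -/
def RepEfficient (R : ShortRule) : Prop :=
  ∀ (n : ℕ) (c : ℕ → ℕ) (B : ℕ) (ℙ : Finset ℕ) (P : Profile n),
    (∀ p ∈ ℙ, c p ≤ B) → (∀ j, P j ⊆ ℙ) →
    ¬ RepDominated c ℙ P (R n c B ℙ P)

/-- The representation score `Σ_i Σ_{ℓ=0}^{|P_i ∩ S|} (1/n)^ℓ`. -/
noncomputable def reprScore (n : ℕ) (P : Profile n) (S : Finset ℕ) : ℚ :=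
  ∑ i, ∑ l ∈ Finset.range ((P i ∩ S).card + 1), (1 / (n : ℚ)) ^ l

/-- The `k`-equal-representation shortlisting rule. -/
noncomputable def equalRepr (k : ℕ) : ShortRule := fun n c B _ P =>
  Tfam (((unionP P).powerset).filter fun S =>
    S.sum c ≤ k * B ∧
    ∀ S' ∈ (unionP P).powerset, S'.sum c ≤ k * B → reprScore n P S' ≤ reprScore n P S)

/-- The geometric median of a set of projects w.r.t. a distance `δ`. -/
noncomputable def med (δ : ℕ → ℕ → ℝ) (V : Finset ℕ) : ℕ :=
  Tproj (V.filter fun p => ∀ q ∈ V, V.sum (fun x => δ p x) ≤ V.sum (fun x => δ q x))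

def IsPartition (V : Finset (Finset ℕ)) (P : Finset ℕ) : Prop :=
  (∀ v ∈ V, v.Nonempty) ∧ V.sup id = P ∧ ∀ v ∈ V, ∀ w ∈ V, v ≠ w → Disjoint v w

/-- `(k, ℓ)`-Voronoï partitions w.r.t. `δ`. -/
def IsVoronoi (δ : ℕ → ℕ → ℝ) (c : ℕ → ℕ) (B k : ℕ) (ℓ : ℝ)
    (V : Finset (Finset ℕ)) (P : Finset ℕ) : Prop :=
  IsPartition V P ∧ (V.sum fun v => c (med δ v)) ≤ k * B ∧
  ∀ v ∈ V, ∀ p ∈ v,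
    (∀ w ∈ V, w ≠ v → δ p (med δ v) ≤ δ p (med δ w)) ∧ δ p (med δ v) ≤ ℓ

/-- The smallest `ℓ` such that a `(k, ℓ)`-Voronoï partition of `P` exists. -/
noncomputable def lstar (δ : ℕ → ℕ → ℝ) (c : ℕ → ℕ) (B k : ℕ) (P : Finset ℕ) : ℝ :=
  sInf {ℓ : ℝ | ∃ V : Finset (Finset ℕ), IsVoronoi δ c B k ℓ V P}

/-- The `k`-median shortlisting rule w.r.t. the distance `δ`. -/
noncomputable def kMedian (δ : ℕ → ℕ → ℝ) (k : ℕ) : ShortRule := fun _ c B _ P =>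
  Tfam ((((unionP P).powerset.powerset).filter fun V =>
    IsVoronoi δ c B k (lstar δ c B k (unionP P)) V (unionP P)).image fun V => V.image (med δ))

/-- `δ` is a metric (on the universe of conceivable projects). -/
def IsMetric (δ : ℕ → ℕ → ℝ) : Prop :=
  (∀ p q, δ p q = 0 ↔ p = q) ∧ (∀ p q, δ p q = δ q p) ∧ ∀ p q r, δ p r ≤ δ p q + δ q r

/-- The approval score of project `p` in profile `A`. -/
def appScore {n : ℕ} (A : Profile n) (p : ℕ) : ℕ :=
  (Finset.univ.filter fun i => p ∈ A i).card

/-- The greedy-approval allocation rule. -/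
noncomputable def greedyApproval : AllocRule := fun _ c B Sh A =>
  GREED c B Sh fun p q => appScore A q < appScore A p ∨ (appScore A p = appScore A q ∧ p < q)

/-- The approval-maximising allocation rule (canonical tie-breaking). -/
noncomputable def approvalMax : AllocRule := fun _ c B Sh A =>
  Tfam ((Sh.powerset).filter fun S =>
    S.sum c ≤ B ∧ ∀ S' ∈ Sh.powerset, S'.sum c ≤ B → S'.sum (appScore A) ≤ S.sum (appScore A))

/-- `A` is an exhaustive budget allocation for the instance `⟨Sh, c, B⟩`. -/
def ExhaustiveAlloc (c : ℕ → ℕ) (B : ℕ) (Sh A : Finset ℕ) : Prop :=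
  A ⊆ Sh ∧ A.sum c ≤ B ∧ ∀ p ∈ Sh, p ∉ A → ¬ (A.sum c + c p ≤ B)

/-- An allocation rule is exhaustive if it always returns an exhaustive allocation. -/
def ExhaustiveRule (F : AllocRule) : Prop :=
  ∀ (n : ℕ) (c : ℕ → ℕ) (B : ℕ) (Sh : Finset ℕ) (A : Profile n),
    (∀ j, A j ⊆ Sh) → ExhaustiveAlloc c B Sh (F n c B Sh A)

/-- Unanimity of an allocation rule. -/
def Unanimous (F : AllocRule) : Prop :=
  ∀ (n : ℕ) (c : ℕ → ℕ) (B : ℕ) (Sh : Finset ℕ) (a : Finset ℕ),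
    a ⊆ Sh → a.sum c ≤ B → a ⊆ F n c B Sh (fun _ => a)

/-- Strong unanimity of an allocation rule. -/
def StronglyUnanimous (F : AllocRule) : Prop :=
  ∀ (n : ℕ) (c : ℕ → ℕ) (B : ℕ) (Sh : Finset ℕ) (i : Fin n) (a : Finset ℕ) (A : Profile n),
    3 ≤ n → a ⊆ Sh → a.sum c ≤ B → (∀ j, j ≠ i → A j = a) → a ⊆ F n c B Sh A

/-- A preference model: given the cost function and an ideal set, the utility
of a budget allocation.  `overlapU` and `costU` are the two models used. -/
abbrev PrefModel := (ℕ → ℕ) → Finset ℕ → Finset ℕ → ℕ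

def overlapU : PrefModel := fun _ P A => (A ∩ P).card
def costU : PrefModel := fun c P A => (A ∩ P).sum c

/-- Budget allocations reachable by agent `i` by changing her own ballot. -/
noncomputable def reachable (n : ℕ) (c : ℕ → ℕ) (B : ℕ) (F : AllocRule)
    (Sh : Finset ℕ) (A : Profile n) (i : Fin n) : Finset (Finset ℕ) :=
  (Sh.powerset).image fun b => F n c B Sh (Function.update A i b)

/-- The best response `A*_i(I, A, F)` of agent `i` (with preference order `r`). -/
noncomputable def Astar (U : PrefModel) (n : ℕ) (c : ℕ → ℕ) (B : ℕ) (F : AllocRule)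
    (r : ℕ → ℕ → Prop) (Sh : Finset ℕ) (A : Profile n) (i : Fin n) : Finset ℕ :=
  Tfam ((reachable n c B F Sh A i).filter fun X =>
    ∀ Y ∈ reachable n c B F Sh A i, U c (GREED c B Sh r) Y ≤ U c (GREED c B Sh r) X)

/-- `F*(I, A)`: the outcome after agent `i` best-responds to profile `A`. -/
noncomputable def Fstar (U : PrefModel) (n : ℕ) (c : ℕ → ℕ) (B : ℕ) (F : AllocRule)
    (r : ℕ → ℕ → Prop) (Sh : Finset ℕ) (A : Profile n) (i : Fin n) : Finset ℕ :=
  F n c B Sh (Function.update A i (Astar U n c B F r Sh A i))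

/-- `Pi'` is a successful pessimistic manipulation for agent `i` (base profile `P`). -/
def SuccPess (U : PrefModel) (R : ShortRule) (F : AllocRule) (n : ℕ) (c : ℕ → ℕ) (B : ℕ)
    (ℙ : Finset ℕ) (prefs : Fin n → ℕ → ℕ → Prop) (P : Profile n) (i : Fin n)
    (Pi' : Finset ℕ) : Prop :=
  let Sh := R n c B ℙ P
  let Sh' := R n c B ℙ (Function.update P i Pi')
  let tp := GREED c B (Sh ∪ Sh') (prefs i)
  (∀ A A' : Profile n, (∀ j, A j ⊆ Sh) → (∀ j, A' j ⊆ Sh') →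
      U c tp (Fstar U n c B F (prefs i) Sh A i) ≤ U c tp (Fstar U n c B F (prefs i) Sh' A' i)) ∧
  ∃ A A' : Profile n, (∀ j, A j ⊆ Sh) ∧ (∀ j, A' j ⊆ Sh') ∧
      U c tp (Fstar U n c B F (prefs i) Sh A i) < U c tp (Fstar U n c B F (prefs i) Sh' A' i)

/-- `Pi'` is a successful optimistic manipulation for agent `i` (base profile `P`). -/
def SuccOpt (U : PrefModel) (R : ShortRule) (F : AllocRule) (n : ℕ) (c : ℕ → ℕ) (B : ℕ)
    (ℙ : Finset ℕ) (prefs : Fin n → ℕ → ℕ → Prop) (P : Profile n) (i : Fin n)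
    (Pi' : Finset ℕ) : Prop :=
  let Sh := R n c B ℙ P
  let Sh' := R n c B ℙ (Function.update P i Pi')
  let tp := GREED c B (Sh ∪ Sh') (prefs i)
  ∃ A A' : Profile n, (∀ j, A j ⊆ Sh) ∧ (∀ j, A' j ⊆ Sh') ∧
      U c tp (Fstar U n c B F (prefs i) Sh A i) < U c tp (Fstar U n c B F (prefs i) Sh' A' i)

/-- `Pi'` is a successful anticipative manipulation for agent `i` (base profile `P`). -/
def SuccAnt (U : PrefModel) (R : ShortRule) (F : AllocRule) (n : ℕ) (c : ℕ → ℕ) (B : ℕ)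
    (ℙ : Finset ℕ) (prefs : Fin n → ℕ → ℕ → Prop) (P : Profile n) (i : Fin n)
    (Pi' : Finset ℕ) : Prop :=
  let Sh := R n c B ℙ P
  let Sh' := R n c B ℙ (Function.update P i Pi')
  let tp := GREED c B (Sh ∪ Sh') (prefs i)
  U c tp (Fstar U n c B F (prefs i) Sh (fun j => GREED c B Sh (prefs j)) i)
    < U c tp (Fstar U n c B F (prefs i) Sh' (fun j => GREED c B Sh' (prefs j)) i)

section FSSP

variable (U : PrefModel) (R : ShortRule) (F : AllocRule)

/-- First-stage strategyproofness, awareness-restricted, pessimistic. -/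
def R_FSSP_P : Prop :=
  ∀ (n : ℕ) (c : ℕ → ℕ) (B : ℕ) (ℙ : Finset ℕ) (prefs : Fin n → ℕ → ℕ → Prop)
    (C P : Profile n) (i : Fin n) (Pi' : Finset ℕ),
    (∀ p ∈ ℙ, c p ≤ B) → (∀ j, IsStrictTotalOrder ℕ (prefs j)) →
    (∀ j, C j ⊆ ℙ) → (∀ j, P j ⊆ C j) → Pi' ⊆ C i →
    ¬ SuccPess U R F n c B ℙ prefs (Function.update P i (GREED c B (C i) (prefs i))) i Pi'

/-- First-stage strategyproofness, awareness-restricted, optimistic. -/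
def R_FSSP_O : Prop :=
  ∀ (n : ℕ) (c : ℕ → ℕ) (B : ℕ) (ℙ : Finset ℕ) (prefs : Fin n → ℕ → ℕ → Prop)
    (C P : Profile n) (i : Fin n) (Pi' : Finset ℕ),
    (∀ p ∈ ℙ, c p ≤ B) → (∀ j, IsStrictTotalOrder ℕ (prefs j)) →
    (∀ j, C j ⊆ ℙ) → (∀ j, P j ⊆ C j) → Pi' ⊆ C i →
    ¬ SuccOpt U R F n c B ℙ prefs (Function.update P i (GREED c B (C i) (prefs i))) i Pi'

/-- First-stage strategyproofness, awareness-restricted, anticipative. -/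
def R_FSSP_A : Prop :=
  ∀ (n : ℕ) (c : ℕ → ℕ) (B : ℕ) (ℙ : Finset ℕ) (prefs : Fin n → ℕ → ℕ → Prop)
    (C P : Profile n) (i : Fin n) (Pi' : Finset ℕ),
    (∀ p ∈ ℙ, c p ≤ B) → (∀ j, IsStrictTotalOrder ℕ (prefs j)) →
    (∀ j, C j ⊆ ℙ) → (∀ j, P j ⊆ C j) → Pi' ⊆ C i →
    ¬ SuccAnt U R F n c B ℙ prefs (Function.update P i (GREED c B (C i) (prefs i))) i Pi'

/-- First-stage strategyproofness, unrestricted, pessimistic. -/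
def U_FSSP_P : Prop :=
  ∀ (n : ℕ) (c : ℕ → ℕ) (B : ℕ) (ℙ : Finset ℕ) (prefs : Fin n → ℕ → ℕ → Prop)
    (C P : Profile n) (i : Fin n) (Pi' : Finset ℕ),
    (∀ p ∈ ℙ, c p ≤ B) → (∀ j, IsStrictTotalOrder ℕ (prefs j)) →
    (∀ j, C j ⊆ ℙ) → (∀ j, P j ⊆ C j) → Pi' ⊆ C i ∪ unionP P →
    ¬ SuccPess U R F n c B ℙ prefs
        (Function.update P i (GREED c B (C i ∪ unionP P) (prefs i))) i Pi'

/-- First-stage strategyproofness, unrestricted, optimistic. -/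
def U_FSSP_O : Prop :=
  ∀ (n : ℕ) (c : ℕ → ℕ) (B : ℕ) (ℙ : Finset ℕ) (prefs : Fin n → ℕ → ℕ → Prop)
    (C P : Profile n) (i : Fin n) (Pi' : Finset ℕ),
    (∀ p ∈ ℙ, c p ≤ B) → (∀ j, IsStrictTotalOrder ℕ (prefs j)) →
    (∀ j, C j ⊆ ℙ) → (∀ j, P j ⊆ C j) → Pi' ⊆ C i ∪ unionP P →
    ¬ SuccOpt U R F n c B ℙ prefs
        (Function.update P i (GREED c B (C i ∪ unionP P) (prefs i))) i Pi'

/-- First-stage strategyproofness, unrestricted, anticipative. -/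
def U_FSSP_A : Prop :=
  ∀ (n : ℕ) (c : ℕ → ℕ) (B : ℕ) (ℙ : Finset ℕ) (prefs : Fin n → ℕ → ℕ → Prop)
    (C P : Profile n) (i : Fin n) (Pi' : Finset ℕ),
    (∀ p ∈ ℙ, c p ≤ B) → (∀ j, IsStrictTotalOrder ℕ (prefs j)) →
    (∀ j, C j ⊆ ℙ) → (∀ j, P j ⊆ C j) → Pi' ⊆ C i ∪ unionP P →
    ¬ SuccAnt U R F n c B ℙ prefs
        (Function.update P i (GREED c B (C i ∪ unionP P) (prefs i))) i Pi'

end FSSP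

/-- Costs of the witnessing instance: `c(p₁)=c(p₂)=c(p₃)=4`,
`c(p₄)=c(p₅)=6`, `c(p₆)=c(p₇)=c(p₈)=3`. -/
def c18 : ℕ → ℕ := fun p => if p ≤ 3 then 4 else if p ≤ 5 then 6 else 3

/-- The eight projects of the witnessing instance (budget `B = 12`). -/
def P18 : Finset ℕ := {1, 2, 3, 4, 5, 6, 7, 8}


/-! ### Auxiliary lemmas for the proof -/

lemma first_eq {r : ℕ → ℕ → Prop} (asm : ∀ a b, r a b → ¬ r b a) {P : Finset ℕ} {p : ℕ}
    (hp : p ∈ P) (h : ∀ q ∈ P, q ≠ p → r p q) : first r P = p := by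
  have hex : ∃ p ∈ P, ∀ q ∈ P, q ≠ p → r p q := ⟨p, hp, h⟩
  rw [first, dif_pos hex]
  obtain ⟨hmem, hspec⟩ := hex.choose_spec
  by_contra hne
  exact asm _ _ (h _ hmem hne) (hspec p hp (fun e => hne e.symm))

lemma greedy_zero (c : ℕ → ℕ) (r : ℕ → ℕ → Prop) (P : Finset ℕ) (b : ℕ) :
    greedyAux c r 0 P b = ∅ := rfl

lemma greedy_step_yes' (c : ℕ → ℕ) (r : ℕ → ℕ → Prop) (asm : ∀ a b, r a b → ¬ r b a)
    (n fuel b : ℕ) (P : Finset ℕ) (p : ℕ) (hf : n = fuel + 1) (hp : p ∈ P)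
    (hfirst : ∀ q ∈ P, q ≠ p → r p q) (hc : c p ≤ b) :
    greedyAux c r n P b = insert p (greedyAux c r fuel (P.erase p) (b - c p)) := by
  subst hf
  rw [greedyAux, if_pos ⟨p, hp⟩, first_eq asm hp hfirst, if_pos hc]

lemma greedy_step_no' (c : ℕ → ℕ) (r : ℕ → ℕ → Prop) (asm : ∀ a b, r a b → ¬ r b a)
    (n fuel b : ℕ) (P : Finset ℕ) (p : ℕ) (hf : n = fuel + 1) (hp : p ∈ P)
    (hfirst : ∀ q ∈ P, q ≠ p → r p q) (hc : ¬ c p ≤ b) :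
    greedyAux c r n P b = greedyAux c r fuel (P.erase p) b := by
  subst hf
  rw [greedyAux, if_pos ⟨p, hp⟩, first_eq asm hp hfirst, if_neg hc]

lemma Tfam_eq {𝔓 : Finset (Finset ℕ)} {P : Finset ℕ} (hP : P ∈ 𝔓)
    (hmax : ∀ Q ∈ 𝔓, Q ≠ P → enc Q < enc P) : Tfam 𝔓 = P := by
  have hex : ∃ X ∈ 𝔓, ∀ Q ∈ 𝔓, enc Q ≤ enc X := by
    refine ⟨P, hP, fun Q hQ => ?_⟩
    by_cases h : Q = P
    · simp [h]
    · exact (hmax Q hQ h).le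
  rw [Tfam, dif_pos hex]
  obtain ⟨hmem, hspec⟩ := hex.choose_spec
  by_contra hne
  exact absurd (hspec P hP) (not_le.mpr (hmax _ hmem hne))

lemma enc_tail_lt {m : ℕ} {S : Finset ℕ} (h : ∀ i ∈ S, m < i) : enc S < (1/2:ℚ)^m := by
  rcases S.eq_empty_or_nonempty with rfl | ⟨x, hx⟩
  · simp only [enc, Finset.sum_empty]
    positivity
  · set M := S.sup id + 1 with hM
    have hS : S ⊆ Finset.Ico (m+1) M := by
      intro i hi
      simp only [Finset.mem_Ico, hM, Nat.lt_succ_iff]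
      exact ⟨h i hi, Finset.le_sup (f := id) hi⟩
    have h1 : enc S ≤ ∑ i ∈ Finset.Ico (m+1) M, (1/2:ℚ)^i :=
      Finset.sum_le_sum_of_subset_of_nonneg hS (fun i _ _ => by positivity)
    have hmM : m + 1 ≤ M := by
      have h5 := h x hx
      have h6 : x ≤ S.sup id := Finset.le_sup (f := id) hx
      omega
    have h2 : ∑ i ∈ Finset.Ico (m+1) M, (1/2:ℚ)^i
        = ((1/2:ℚ)^M - (1/2)^(m+1))/((1/2:ℚ) - 1) := geom_sum_Ico (by norm_num) hmM
    have h3 : (0:ℚ) < (1/2:ℚ)^M := by positivity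
    have h4 : ((1/2:ℚ)^M - (1/2)^(m+1))/((1/2:ℚ) - 1) = (1/2:ℚ)^m - 2*(1/2)^M := by
      rw [pow_succ]
      field_simp
      ring
    have := h1.trans_eq (h2.trans h4)
    linarith

lemma enc_lt_of {P Q : Finset ℕ} {m : ℕ} (hm : m ∈ P) (hm' : m ∉ Q)
    (h : ∀ i ∈ Q, i ∉ P → m < i) : enc Q < enc P := by
  have hsplit : enc (Q ∩ P) + enc (Q \ P) = enc Q := Finset.sum_inter_add_sum_sdiff Q P _
  have h2 : enc (Q \ P) < (1/2:ℚ)^m :=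
    enc_tail_lt (fun i hi => h i (Finset.mem_sdiff.mp hi).1 (Finset.mem_sdiff.mp hi).2)
  have hmQ : m ∉ Q ∩ P := fun hc => hm' (Finset.mem_inter.mp hc).1
  have hins : enc (insert m (Q ∩ P)) = (1/2:ℚ)^m + enc (Q ∩ P) := Finset.sum_insert hmQ
  have hsub : insert m (Q ∩ P) ⊆ P := by
    intro i hi
    rcases Finset.mem_insert.mp hi with rfl | hi
    · exact hm
    · exact (Finset.mem_inter.mp hi).2
  have h3 : enc (insert m (Q ∩ P)) ≤ enc P :=
    Finset.sum_le_sum_of_subset_of_nonneg hsub (fun i _ _ => by positivity)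
  linarith

/-- The three preference keys. -/
def fv : Fin 3 → ℕ → ℕ :=
  ![fun n => if n = 6 then 0 else if n = 7 then 1 else if n = 8 then 2 else n + 3,
    fun n => if n = 4 then 0 else if n = 5 then 1 else n + 2,
    fun n => if n = 1 then 0 else if n = 2 then 1 else if n = 3 then 2 else n + 3]

/-- The witnessing preference orders. -/
def prefsW : Fin 3 → ℕ → ℕ → Prop := fun j p q => fv j p < fv j q

instance (j : Fin 3) (p q : ℕ) : Decidable (prefsW j p q) :=
  inferInstanceAs (Decidable (fv j p < fv j q))

lemma asymW : ∀ j, ∀ a b : ℕ, prefsW j a b → ¬ prefsW j b a :=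
  fun _ _ _ h h' => Nat.lt_asymm h h'

lemma fvinj : ∀ j a b, fv j a = fv j b → a = b := by
  intro j a b h
  fin_cases j <;> simp [fv] at h <;> split_ifs at h <;> omega

lemma stoW : ∀ j, IsStrictTotalOrder ℕ (prefsW j) := fun j =>
  { trichotomous := fun a b => by
      intro h1 h2
      rcases lt_trichotomy (fv j a) (fv j b) with h|h|h
      · exact absurd h h1
      · exact fvinj j a b h
      · exact absurd h h2
    irrefl := fun a => lt_irrefl _
    trans := fun _ _ _ => Nat.lt_trans }

/-- The manipulated profile. -/
def Aw : Profile 3 := ![({5,6,7} : Finset ℕ), {4,5}, {1,2,3}]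

/-- The truthful profile. -/
def Aw' : Profile 3 := ![({6,7,8} : Finset ℕ), {4,5}, {1,2,3}]

lemma greedW0 : GREED c18 12 P18 (prefsW 0) = ({6,7,8} : Finset ℕ) := by
  unfold GREED
  rw [show P18.card = 8 from rfl]
  rw [greedy_step_yes' c18 (prefsW 0) (asymW 0) 8 7 12 P18 6 rfl (by decide) (by decide) (by decide)]
  rw [show P18.erase 6 = ({1,2,3,4,5,7,8} : Finset ℕ) from by decide, show (12 - c18 6 : ℕ) = 9 from rfl]
  rw [greedy_step_yes' c18 (prefsW 0) (asymW 0) 7 6 9 ({1,2,3,4,5,7,8} : Finset ℕ) 7 rfl (by decide) (by decide) (by decide)]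
  rw [show ({1,2,3,4,5,7,8} : Finset ℕ).erase 7 = ({1,2,3,4,5,8} : Finset ℕ) from by decide, show (9 - c18 7 : ℕ) = 6 from rfl]
  rw [greedy_step_yes' c18 (prefsW 0) (asymW 0) 6 5 6 ({1,2,3,4,5,8} : Finset ℕ) 8 rfl (by decide) (by decide) (by decide)]
  rw [show ({1,2,3,4,5,8} : Finset ℕ).erase 8 = ({1,2,3,4,5} : Finset ℕ) from by decide, show (6 - c18 8 : ℕ) = 3 from rfl]
  rw [greedy_step_no' c18 (prefsW 0) (asymW 0) 5 4 3 ({1,2,3,4,5} : Finset ℕ) 1 rfl (by decide) (by decide) (by decide)]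
  rw [show ({1,2,3,4,5} : Finset ℕ).erase 1 = ({2,3,4,5} : Finset ℕ) from by decide]
  rw [greedy_step_no' c18 (prefsW 0) (asymW 0) 4 3 3 ({2,3,4,5} : Finset ℕ) 2 rfl (by decide) (by decide) (by decide)]
  rw [show ({2,3,4,5} : Finset ℕ).erase 2 = ({3,4,5} : Finset ℕ) from by decide]
  rw [greedy_step_no' c18 (prefsW 0) (asymW 0) 3 2 3 ({3,4,5} : Finset ℕ) 3 rfl (by decide) (by decide) (by decide)]
  rw [show ({3,4,5} : Finset ℕ).erase 3 = ({4,5} : Finset ℕ) from by decide]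
  rw [greedy_step_no' c18 (prefsW 0) (asymW 0) 2 1 3 ({4,5} : Finset ℕ) 4 rfl (by decide) (by decide) (by decide)]
  rw [show ({4,5} : Finset ℕ).erase 4 = ({5} : Finset ℕ) from by decide]
  rw [greedy_step_no' c18 (prefsW 0) (asymW 0) 1 0 3 ({5} : Finset ℕ) 5 rfl (by decide) (by decide) (by decide)]
  rw [show ({5} : Finset ℕ).erase 5 = (∅ : Finset ℕ) from by decide]
  rw [greedy_zero]
  decide

lemma greedW1 : GREED c18 12 P18 (prefsW 1) = ({4,5} : Finset ℕ) := by
  unfold GREED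
  rw [show P18.card = 8 from rfl]
  rw [greedy_step_yes' c18 (prefsW 1) (asymW 1) 8 7 12 P18 4 rfl (by decide) (by decide) (by decide)]
  rw [show P18.erase 4 = ({1,2,3,5,6,7,8} : Finset ℕ) from by decide, show (12 - c18 4 : ℕ) = 6 from rfl]
  rw [greedy_step_yes' c18 (prefsW 1) (asymW 1) 7 6 6 ({1,2,3,5,6,7,8} : Finset ℕ) 5 rfl (by decide) (by decide) (by decide)]
  rw [show ({1,2,3,5,6,7,8} : Finset ℕ).erase 5 = ({1,2,3,6,7,8} : Finset ℕ) from by decide, show (6 - c18 5 : ℕ) = 0 from rfl]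
  rw [greedy_step_no' c18 (prefsW 1) (asymW 1) 6 5 0 ({1,2,3,6,7,8} : Finset ℕ) 1 rfl (by decide) (by decide) (by decide)]
  rw [show ({1,2,3,6,7,8} : Finset ℕ).erase 1 = ({2,3,6,7,8} : Finset ℕ) from by decide]
  rw [greedy_step_no' c18 (prefsW 1) (asymW 1) 5 4 0 ({2,3,6,7,8} : Finset ℕ) 2 rfl (by decide) (by decide) (by decide)]
  rw [show ({2,3,6,7,8} : Finset ℕ).erase 2 = ({3,6,7,8} : Finset ℕ) from by decide]
  rw [greedy_step_no' c18 (prefsW 1) (asymW 1) 4 3 0 ({3,6,7,8} : Finset ℕ) 3 rfl (by decide) (by decide) (by decide)]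
  rw [show ({3,6,7,8} : Finset ℕ).erase 3 = ({6,7,8} : Finset ℕ) from by decide]
  rw [greedy_step_no' c18 (prefsW 1) (asymW 1) 3 2 0 ({6,7,8} : Finset ℕ) 6 rfl (by decide) (by decide) (by decide)]
  rw [show ({6,7,8} : Finset ℕ).erase 6 = ({7,8} : Finset ℕ) from by decide]
  rw [greedy_step_no' c18 (prefsW 1) (asymW 1) 2 1 0 ({7,8} : Finset ℕ) 7 rfl (by decide) (by decide) (by decide)]
  rw [show ({7,8} : Finset ℕ).erase 7 = ({8} : Finset ℕ) from by decide]
  rw [greedy_step_no' c18 (prefsW 1) (asymW 1) 1 0 0 ({8} : Finset ℕ) 8 rfl (by decide) (by decide) (by decide)]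
  rw [show ({8} : Finset ℕ).erase 8 = (∅ : Finset ℕ) from by decide]
  rw [greedy_zero]
  decide

lemma greedW2 : GREED c18 12 P18 (prefsW 2) = ({1,2,3} : Finset ℕ) := by
  unfold GREED
  rw [show P18.card = 8 from rfl]
  rw [greedy_step_yes' c18 (prefsW 2) (asymW 2) 8 7 12 P18 1 rfl (by decide) (by decide) (by decide)]
  rw [show P18.erase 1 = ({2,3,4,5,6,7,8} : Finset ℕ) from by decide, show (12 - c18 1 : ℕ) = 8 from rfl]
  rw [greedy_step_yes' c18 (prefsW 2) (asymW 2) 7 6 8 ({2,3,4,5,6,7,8} : Finset ℕ) 2 rfl (by decide) (by decide) (by decide)]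
  rw [show ({2,3,4,5,6,7,8} : Finset ℕ).erase 2 = ({3,4,5,6,7,8} : Finset ℕ) from by decide, show (8 - c18 2 : ℕ) = 4 from rfl]
  rw [greedy_step_yes' c18 (prefsW 2) (asymW 2) 6 5 4 ({3,4,5,6,7,8} : Finset ℕ) 3 rfl (by decide) (by decide) (by decide)]
  rw [show ({3,4,5,6,7,8} : Finset ℕ).erase 3 = ({4,5,6,7,8} : Finset ℕ) from by decide, show (4 - c18 3 : ℕ) = 0 from rfl]
  rw [greedy_step_no' c18 (prefsW 2) (asymW 2) 5 4 0 ({4,5,6,7,8} : Finset ℕ) 4 rfl (by decide) (by decide) (by decide)]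
  rw [show ({4,5,6,7,8} : Finset ℕ).erase 4 = ({5,6,7,8} : Finset ℕ) from by decide]
  rw [greedy_step_no' c18 (prefsW 2) (asymW 2) 4 3 0 ({5,6,7,8} : Finset ℕ) 5 rfl (by decide) (by decide) (by decide)]
  rw [show ({5,6,7,8} : Finset ℕ).erase 5 = ({6,7,8} : Finset ℕ) from by decide]
  rw [greedy_step_no' c18 (prefsW 2) (asymW 2) 3 2 0 ({6,7,8} : Finset ℕ) 6 rfl (by decide) (by decide) (by decide)]
  rw [show ({6,7,8} : Finset ℕ).erase 6 = ({7,8} : Finset ℕ) from by decide]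
  rw [greedy_step_no' c18 (prefsW 2) (asymW 2) 2 1 0 ({7,8} : Finset ℕ) 7 rfl (by decide) (by decide) (by decide)]
  rw [show ({7,8} : Finset ℕ).erase 7 = ({8} : Finset ℕ) from by decide]
  rw [greedy_step_no' c18 (prefsW 2) (asymW 2) 1 0 0 ({8} : Finset ℕ) 8 rfl (by decide) (by decide) (by decide)]
  rw [show ({8} : Finset ℕ).erase 8 = (∅ : Finset ℕ) from by decide]
  rw [greedy_zero]
  decide

set_option maxRecDepth 1000000 in
lemma amAw : approvalMax 3 c18 12 P18 Aw = ({5,6,7} : Finset ℕ) := by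
  unfold approvalMax
  apply Tfam_eq
  · decide
  · decide

set_option maxRecDepth 1000000 in
lemma amAw' : approvalMax 3 c18 12 P18 Aw' = ({1,2,3} : Finset ℕ) := by
  unfold approvalMax
  apply Tfam_eq
  · decide
  · have key : ∀ Q ∈ (P18.powerset).filter
        (fun S => S.sum c18 ≤ 12 ∧ ∀ S' ∈ P18.powerset, S'.sum c18 ≤ 12 →
          S'.sum (appScore Aw') ≤ S.sum (appScore Aw')),
        Q ≠ ({1,2,3} : Finset ℕ) →
        ∃ m ∈ ({1,2,3} : Finset ℕ), m ∉ Q ∧ ∀ i ∈ Q, i ∉ ({1,2,3} : Finset ℕ) → m < i := by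
      decide
    intro Q hQ hne
    obtain ⟨m, hm, hm', hlt⟩ := key Q hQ hne
    exact enc_lt_of hm hm' hlt

/-- The approval-maximising rule (canonical tie-breaking) is not
approximately strategyproof, under both the overlap and the cost preference
models, witnessed by the described instance where agent 1 (with preferences
`p₆ ▷ p₇ ▷ p₈ ▷ …`) submits `{p₅, p₆, p₇}` instead of `{p₆, p₇, p₈}`. -/
theorem approvalMax_not_approx_SP :
    ∃ prefs : Fin 3 → ℕ → ℕ → Prop,
      (∀ j, IsStrictTotalOrder ℕ (prefs j)) ∧
      (prefs 0 6 7 ∧ prefs 0 7 8 ∧ ∀ q ∈ P18, q ∉ ({6, 7, 8} : Finset ℕ) → prefs 0 8 q) ∧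
      (prefs 1 4 5 ∧ ∀ q ∈ P18, q ∉ ({4, 5} : Finset ℕ) → prefs 1 5 q) ∧
      (prefs 2 1 2 ∧ prefs 2 2 3 ∧ ∀ q ∈ P18, q ∉ ({1, 2, 3} : Finset ℕ) → prefs 2 3 q) ∧
      ∃ (A : Profile 3) (i : Fin 3),
        i = 0 ∧ (∀ j, A j ⊆ P18) ∧
        A i = ({5, 6, 7} : Finset ℕ) ∧
        A i ≠ GREED c18 12 P18 (prefs i) ∧
        (∀ j, j ≠ i → A j = GREED c18 12 P18 (prefs j)) ∧
        ∀ p ∈ P18,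
          overlapU c18 (GREED c18 12 P18 (prefs i))
              (insert p (approvalMax 3 c18 12 P18
                (Function.update A i (GREED c18 12 P18 (prefs i))))) <
            overlapU c18 (GREED c18 12 P18 (prefs i)) (approvalMax 3 c18 12 P18 A) ∧
          costU c18 (GREED c18 12 P18 (prefs i))
              (insert p (approvalMax 3 c18 12 P18
                (Function.update A i (GREED c18 12 P18 (prefs i))))) <
            costU c18 (GREED c18 12 P18 (prefs i)) (approvalMax 3 c18 12 P18 A) := by
  refine ⟨prefsW, stoW, ⟨by decide, by decide, by decide⟩, ⟨by decide, by decide⟩,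
    ⟨by decide, by decide, by decide⟩, Aw, 0, rfl, by decide, by decide, ?_, ?_, ?_⟩
  · rw [greedW0]
    decide
  · intro j hj
    fin_cases j
    · exact absurd rfl hj
    · show Aw 1 = GREED c18 12 P18 (prefsW 1)
      rw [greedW1]
      decide
    · show Aw 2 = GREED c18 12 P18 (prefsW 2)
      rw [greedW2]
      decide
  · have hup : Function.update Aw 0 ({6,7,8} : Finset ℕ) = Aw' := by
      funext j
      fin_cases j <;> simp [Aw, Aw', Function.update]
    rw [greedW0, hup, amAw', amAw]
    decide

end PB
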